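/- Let L₁ be the linear operator on C[0,1] given by L₁u(t) = ∫₀¹ |k₁(t,s)| g₁(s) u(s) ds, and suppose there is ε > 0 with f₁(t,u,v) ≤ (μ(L₁) − ε)|u| for all (t,u,v) ∈ [0,1]×[−ρ₀,ρ₀]², where μ(L₁) = 1/r(L₁) is the reciprocal of the spectral radius of L₁. If (u,v) ∈ K with ‖u‖_∞ ≤ ρ₀, ‖v‖_∞ ≤ ρ₀ and λ(u,v) = T(u,v) for some λ ≥ 1, then u = 0. (Key step: |u(t)| ≤ (μ(L₁)−ε)ⁿ L₁ⁿ|u|(t) for all n, forcing 1 ≤ (μ(L₁)−ε)/μ(L₁) < 1 if u ≠ 0.) -/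

import Mathlib

open MeasureTheory Set

/-- The sup norm of a function over [0,1]. -/
noncomputable def supNorm (w : ℝ → ℝ) : ℝ :=
  sSup ((fun s => |w s|) '' Icc (0:ℝ) 1)

/-- Membership in the cone K̃ = {w ∈ C[0,1] : min_{t∈[a,b]} w(t) ≥ c‖w‖_∞}. -/
def inCone (a b c : ℝ) (w : ℝ → ℝ) : Prop :=
  ContinuousOn w (Icc (0:ℝ) 1) ∧ ∀ t ∈ Icc a b, c * supNorm w ≤ w t

/-- A component of the Hammerstein integral operator. -/
noncomputable def Ham (k : ℝ → ℝ → ℝ) (g : ℝ → ℝ) (f : ℝ → ℝ → ℝ → ℝ)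
    (u v : ℝ → ℝ) (t : ℝ) : ℝ :=
  ∫ s in Icc (0:ℝ) 1, k t s * g s * f s (u s) (v s)

/-- The standing assumptions on a kernel `k`, weight `g` (with majorant `Φ`),
nonlinearity `f` and data `a, b, c` of one Hammerstein integral equation. -/
structure Standing (k : ℝ → ℝ → ℝ) (g Φ : ℝ → ℝ) (f : ℝ → ℝ → ℝ → ℝ)
    (a b c : ℝ) : Prop where
  k_meas : Measurable (Function.uncurry k)
  k_cont : ∀ τ ∈ Icc (0:ℝ) 1, ∀ᵐ s ∂(volume.restrict (Icc (0:ℝ) 1)),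
    Filter.Tendsto (fun t => |k t s - k τ s|) (nhds τ) (nhds 0)
  hab : Icc a b ⊆ Icc (0:ℝ) 1
  a_lt_b : a < b
  c_pos : 0 < c
  c_le_one : c ≤ 1
  Φ_meas : Measurable Φ
  Φ_bdd : ∃ C : ℝ, ∀ᵐ s ∂(volume.restrict (Icc (0:ℝ) 1)), |Φ s| ≤ C
  k_le : ∀ t ∈ Icc (0:ℝ) 1, ∀ᵐ s ∂(volume.restrict (Icc (0:ℝ) 1)), |k t s| ≤ Φ s
  k_ge : ∀ t ∈ Icc a b, ∀ᵐ s ∂(volume.restrict (Icc (0:ℝ) 1)), c * Φ s ≤ k t s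
  g_meas : Measurable g
  g_nonneg : ∀ᵐ s ∂(volume.restrict (Icc (0:ℝ) 1)), 0 ≤ g s
  gΦ_int : IntegrableOn (fun s => g s * Φ s) (Icc (0:ℝ) 1)
  gΦ_pos : 0 < ∫ s in Icc a b, Φ s * g s
  f_nonneg : ∀ t u v, 0 ≤ f t u v
  f_meas : ∀ u v : ℝ, Measurable fun t => f t u v
  f_cont : ∀ᵐ t ∂(volume.restrict (Icc (0:ℝ) 1)),
    Continuous fun p : ℝ × ℝ => f t p.1 p.2
  f_bdd : ∀ r > (0:ℝ), ∃ C : ℝ, ∀ᵐ t ∂(volume.restrict (Icc (0:ℝ) 1)),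
    ∀ u v : ℝ, |u| ≤ r → |v| ≤ r → f t u v ≤ C

abbrev I01 : Set ℝ := Set.Icc (0:ℝ) 1

/-- The cone K̃ inside C([0,1],ℝ). -/
def coneCM (a b c : ℝ) : Set C(I01, ℝ) :=
  {w | ∀ t : I01, a ≤ (t:ℝ) → (t:ℝ) ≤ b → c * ‖w‖ ≤ w t}

set_option maxHeartbeats 2000000
set_option linter.unusedSectionVars false

section GeneralAlgebra

variable {A : Type*} [NormedRing A] [NormedAlgebra ℝ A] [CompleteSpace A]

lemma ring_inverse_eq_of_mul {a b : A} (h : IsUnit a) (hb : a * b = 1) :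
    Ring.inverse a = b := by
  have h1 : Ring.inverse a * (a * b) = Ring.inverse a := by rw [hb, mul_one]
  rw [← mul_assoc, Ring.inverse_mul_cancel a h, one_mul] at h1
  exact h1.symm

/-- The resolvent at `l` of `a`. -/
noncomputable def ResA (a : A) (l : ℝ) : A := Ring.inverse (algebraMap ℝ A l - a)

lemma res_unit_formula (a : A) (l0 l : ℝ) (h0 : IsUnit (algebraMap ℝ A l0 - a))
    (hlt : |l0 - l| * ‖ResA a l0‖ < 1) :
    IsUnit (algebraMap ℝ A l - a) ∧
      ResA a l = (∑' n : ℕ, ((l0 - l) • ResA a l0) ^ n) * ResA a l0 := by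
  set c0 : A := algebraMap ℝ A l0 - a with hc0
  set R0 : A := ResA a l0 with hR0
  have hinv : c0 * R0 = 1 := Ring.mul_inverse_cancel c0 h0
  set x : A := (l0 - l) • R0 with hxdef
  have hx : ‖x‖ < 1 := by
    rw [hxdef, norm_smul, Real.norm_eq_abs]
    exact hlt
  have hfac : algebraMap ℝ A l - a = c0 * (1 - x) := by
    have h1 : c0 * x = (l0 - l) • (1 : A) := by
      rw [hxdef, mul_smul_comm, hinv]
    rw [mul_sub, mul_one, h1, hc0]
    rw [Algebra.algebraMap_eq_smul_one, Algebra.algebraMap_eq_smul_one, sub_smul]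
    abel
  have hux : IsUnit (1 - x) := isUnit_one_sub_of_norm_lt_one hx
  have hu : IsUnit (algebraMap ℝ A l - a) := by
    rw [hfac]; exact h0.mul hux
  refine ⟨hu, ?_⟩
  apply ring_inverse_eq_of_mul hu
  rw [hfac]
  rw [mul_assoc, ← mul_assoc (1 - x), mul_neg_geom_series x hx, one_mul, hinv]

lemma res_norm_bound [NormOneClass A] (a : A) (l0 l : ℝ)
    (h0 : IsUnit (algebraMap ℝ A l0 - a))
    (C : ℝ) (hC : |l0 - l| * ‖ResA a l0‖ ≤ C) (hC1 : C < 1) :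
    ‖ResA a l‖ ≤ (1 - C)⁻¹ * ‖ResA a l0‖ := by
  have hlt : |l0 - l| * ‖ResA a l0‖ < 1 := lt_of_le_of_lt hC hC1
  obtain ⟨-, hf⟩ := res_unit_formula a l0 l h0 hlt
  set x : A := (l0 - l) • ResA a l0 with hxdef
  have hxn : ‖x‖ ≤ C := by rw [hxdef, norm_smul, Real.norm_eq_abs]; exact hC
  have hx1 : ‖x‖ < 1 := lt_of_le_of_lt hxn hC1
  have h2 : ‖∑' n : ℕ, x ^ n‖ ≤ (1 - ‖x‖)⁻¹ := by
    have := tsum_geometric_le_of_norm_lt_one x hx1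
    rwa [norm_one, sub_self, zero_add] at this
  have h3 : (1 - ‖x‖)⁻¹ ≤ (1 - C)⁻¹ := by
    apply inv_anti₀ (by linarith) (by linarith)
  have hx0 : (0:ℝ) ≤ ‖x‖ := norm_nonneg _
  calc ‖ResA a l‖ ≤ ‖∑' n : ℕ, x ^ n‖ * ‖ResA a l0‖ := by rw [hf]; exact norm_mul_le _ _
    _ ≤ (1 - C)⁻¹ * ‖ResA a l0‖ :=
        mul_le_mul (h2.trans h3) le_rfl (norm_nonneg _)
          (by apply inv_nonneg.2; linarith)

/-- A closed subset of a Banach algebra stable under the operations relevant for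
positivity arguments (a "closed cone of positive elements"). -/
structure ConeSet (P : Set A) : Prop where
  closed : IsClosed P
  zero : (0:A) ∈ P
  one : (1:A) ∈ P
  add : ∀ x y : A, x ∈ P → y ∈ P → x + y ∈ P
  mul : ∀ x y : A, x ∈ P → y ∈ P → x * y ∈ P
  smul : ∀ (c : ℝ) (x : A), 0 ≤ c → x ∈ P → c • x ∈ P

lemma ConeSet.pow_mem {P : Set A} (hP : ConeSet P) {x : A} (hxP : x ∈ P) (n : ℕ) :
    x ^ n ∈ P := by
  induction n with
  | zero => simpa using hP.one
  | succ n ih => rw [pow_succ]; exact hP.mul _ _ ih hxP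

lemma ConeSet.tsum_pow_mem {P : Set A} (hP : ConeSet P)
    {x : A} (hx : ‖x‖ < 1) (hxP : x ∈ P) : (∑' n : ℕ, x ^ n) ∈ P := by
  have hsum : HasSum (fun n : ℕ => x ^ n) (∑' n : ℕ, x ^ n) :=
    (summable_geometric_of_norm_lt_one hx).hasSum
  exact hP.closed.mem_of_tendsto hsum (Filter.Eventually.of_forall fun F =>
    Finset.sum_induction _ (· ∈ P) hP.add hP.zero fun n _ => hP.pow_mem hxP n)

/-- Stepping the resolvent down: if the resolvent at `l0` lies in the cone, so does the
resolvent at any nearby `l ≤ l0`. -/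
lemma ConeSet.res_step {P : Set A} (hP : ConeSet P) (a : A) (l0 l : ℝ)
    (h0 : IsUnit (algebraMap ℝ A l0 - a)) (hR0 : ResA a l0 ∈ P) (hl : l ≤ l0)
    (hlt : |l0 - l| * ‖ResA a l0‖ < 1) : ResA a l ∈ P := by
  obtain ⟨-, hf⟩ := res_unit_formula a l0 l h0 hlt
  rw [hf]
  have hx : ‖(l0 - l) • ResA a l0‖ < 1 := by
    rw [norm_smul, Real.norm_eq_abs]; exact hlt
  exact hP.mul _ _ (hP.tsum_pow_mem hx (hP.smul _ _ (by linarith) hR0)) hR0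

/-- Neumann series: for `m > ‖a‖` the resolvent exists and lies in the cone. -/
lemma ConeSet.res_neumann {P : Set A} (hP : ConeSet P) (a : A) (haP : a ∈ P)
    (m : ℝ) (hm : ‖a‖ < m) :
    IsUnit (algebraMap ℝ A m - a) ∧ ResA a m ∈ P := by
  have hm0 : 0 < m := (norm_nonneg a).trans_lt hm
  set x : A := m⁻¹ • a with hxdef
  have hx : ‖x‖ < 1 := by
    rw [hxdef, norm_smul, Real.norm_eq_abs, abs_of_pos (inv_pos.2 hm0),
      inv_mul_lt_iff₀ hm0, mul_one]
    exact hm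
  have hfac : algebraMap ℝ A m - a = algebraMap ℝ A m * (1 - x) := by
    rw [mul_sub, mul_one]
    congr 1
    rw [hxdef, ← Algebra.smul_def, smul_smul, mul_inv_cancel₀ hm0.ne', one_smul]
  have hum : IsUnit (algebraMap ℝ A m) :=
    (isUnit_iff_ne_zero.2 hm0.ne').map (algebraMap ℝ A)
  have hu : IsUnit (algebraMap ℝ A m - a) := by
    rw [hfac]; exact hum.mul (isUnit_one_sub_of_norm_lt_one hx)
  refine ⟨hu, ?_⟩
  have hformula : ResA a m = (∑' n : ℕ, x ^ n) * (m⁻¹ • (1:A)) := by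
    apply ring_inverse_eq_of_mul hu
    rw [hfac, mul_assoc, ← mul_assoc (1 - x), mul_neg_geom_series _ hx, one_mul,
      ← Algebra.smul_def, smul_smul, mul_inv_cancel₀ hm0.ne', one_smul]
  rw [hformula]
  exact hP.mul _ _ (hP.tsum_pow_mem hx (hP.smul _ _ (inv_pos.2 hm0).le haP))
    (hP.smul _ _ (inv_pos.2 hm0).le hP.one)

/-- The resolvent is nonzero (its norm is positive) wherever it exists. -/
lemma res_norm_pos [NormOneClass A] (a : A) (l : ℝ)
    (h : IsUnit (algebraMap ℝ A l - a)) : 0 < ‖ResA a l‖ := by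
  rw [norm_pos_iff]
  intro h0
  have hcancel : (algebraMap ℝ A l - a) * ResA a l = 1 := Ring.mul_inverse_cancel _ h
  rw [h0, mul_zero] at hcancel
  have h1 : ‖(1:A)‖ = 1 := norm_one
  rw [← hcancel, norm_zero] at h1
  norm_num at h1

end GeneralAlgebra

noncomputable abbrev OpA := C(I01, ℝ) →L[ℝ] C(I01, ℝ)

/-- Positivity of an operator on `C(I01, ℝ)`. -/
def PosOp (T : OpA) : Prop :=
  ∀ w : C(I01, ℝ), (∀ t, 0 ≤ w t) → ∀ t, 0 ≤ T w t

lemma posOp_coneSet : ConeSet {T : OpA | PosOp T} := by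
  constructor
  · have hrw : {T : OpA | PosOp T}
        = ⋂ (w : C(I01, ℝ)) (_ : ∀ t, 0 ≤ w t) (t : I01), {T : OpA | 0 ≤ (T w) t} := by
      ext T
      simp only [Set.mem_iInter, Set.mem_setOf_eq]
      rfl
    rw [hrw]
    refine isClosed_iInter fun w => isClosed_iInter fun hw => isClosed_iInter fun t => ?_
    exact isClosed_le continuous_const
      ((ContinuousEvalConst.continuous_eval_const t).comp
        (ContinuousLinearMap.apply ℝ C(I01, ℝ) w).continuous)
  · intro w hw t; simp
  · intro w hw t; simpa using hw t
  · intro S T hS hT w hw t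
    have := add_nonneg (hS w hw t) (hT w hw t)
    simpa [ContinuousLinearMap.add_apply, ContinuousMap.add_apply] using this
  · intro S T hS hT w hw t
    simpa [ContinuousLinearMap.mul_apply] using hS (T w) (hT w hw) t
  · intro c T hc hT w hw t
    simp only [ContinuousLinearMap.smul_apply, ContinuousMap.smul_apply, smul_eq_mul]
    exact mul_nonneg hc (hT w hw t)


/-- with `L₁u(t) = ∫₀¹ |k₁(t,s)| g₁(s) u(s) ds` and
`f₁(t,u,v) ≤ (μ(L₁) − ε)|u|` on `[0,1]×[−ρ₀,ρ₀]²`, where `μ(L₁) = 1/r(L₁)`,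
any `(u,v) ∈ K` with `‖u‖_∞ ≤ ρ₀`, `‖v‖_∞ ≤ ρ₀` and `λ(u,v) = T(u,v)` for some
`λ ≥ 1` must have `u = 0`. -/
theorem stmt7 (k₁ k₂ : ℝ → ℝ → ℝ) (g₁ g₂ Φ₁ Φ₂ : ℝ → ℝ)
    (f₁ f₂ : ℝ → ℝ → ℝ → ℝ) (a₁ b₁ c₁ a₂ b₂ c₂ : ℝ)
    (h₁ : Standing k₁ g₁ Φ₁ f₁ a₁ b₁ c₁)
    (h₂ : Standing k₂ g₂ Φ₂ f₂ a₂ b₂ c₂)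
    (L₁ : C(I01, ℝ) →L[ℝ] C(I01, ℝ))
    (hL₁ : ∀ w : C(I01, ℝ), ∀ t : I01, (L₁ w) t =
      ∫ s in Icc (0:ℝ) 1, |k₁ (t:ℝ) s| * g₁ s * w (Set.projIcc (0:ℝ) 1 zero_le_one s))
    (r μ ε ρ₀ : ℝ)
    (hr : spectralRadius ℝ L₁ = ENNReal.ofReal r) (hrpos : 0 < r)
    (hμ : μ = 1 / r) (hε : 0 < ε) (hρ₀ : 0 < ρ₀)
    (hf₁ : ∀ t ∈ Icc (0:ℝ) 1, ∀ u v : ℝ, |u| ≤ ρ₀ → |v| ≤ ρ₀ →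
      f₁ t u v ≤ (μ - ε) * |u|)
    (u v : C(I01, ℝ))
    (hu : u ∈ coneCM a₁ b₁ c₁) (hv : v ∈ coneCM a₂ b₂ c₂)
    (hun : ‖u‖ ≤ ρ₀) (hvn : ‖v‖ ≤ ρ₀)
    (lam : ℝ) (hlam : 1 ≤ lam)
    (hfix₁ : ∀ t : I01, lam * u t = ∫ s in Icc (0:ℝ) 1,
      k₁ (t:ℝ) s * g₁ s * f₁ s (u (Set.projIcc (0:ℝ) 1 zero_le_one s))
        (v (Set.projIcc (0:ℝ) 1 zero_le_one s)))
    (hfix₂ : ∀ t : I01, lam * v t = ∫ s in Icc (0:ℝ) 1,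
      k₂ (t:ℝ) s * g₂ s * f₂ s (u (Set.projIcc (0:ℝ) 1 zero_le_one s))
        (v (Set.projIcc (0:ℝ) 1 zero_le_one s))) :
    u = 0 := by
  classical
  set q : ℝ := μ - ε with hqdef
  have bu : ∀ y : I01, |(u y : ℝ)| ≤ ρ₀ := fun y => by
    have h := u.norm_coe_le_norm y
    rw [Real.norm_eq_abs] at h
    exact h.trans hun
  have bv : ∀ y : I01, |(v y : ℝ)| ≤ ρ₀ := fun y => by
    have h := v.norm_coe_le_norm y
    rw [Real.norm_eq_abs] at h
    exact h.trans hvn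
  by_cases hqpos : 0 < q
  · -- main case : 0 < q = μ - ε
    set w : C(I01, ℝ) := |u| with hwdef
    have hwapp : ∀ t : I01, w t = |u t| := fun t => rfl
    have hwnn : ∀ t : I01, 0 ≤ w t := fun t => by rw [hwapp]; exact abs_nonneg _
    -- positivity of L₁
    have PosL : PosOp L₁ := by
      intro z hz t
      rw [hL₁ z t]
      apply integral_nonneg_of_ae
      filter_upwards [h₁.g_nonneg] with s hg
      exact mul_nonneg (mul_nonneg (abs_nonneg _) hg) (hz _)
    -- the key pointwise inequality  w ≤ q • L₁ w
    have key : ∀ t : I01, w t ≤ q * (L₁ w) t := by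
      intro t
      have hkmeas : Measurable fun s => k₁ (t:ℝ) s :=
        h₁.k_meas.comp (measurable_const.prodMk measurable_id)
      have humeas : Measurable fun s => (u (Set.projIcc (0:ℝ) 1 zero_le_one s) : ℝ) :=
        (u.continuous.comp continuous_projIcc).measurable
      have hHmeas : Measurable fun s =>
          |k₁ (t:ℝ) s| * g₁ s * (q * |(u (Set.projIcc (0:ℝ) 1 zero_le_one s) : ℝ)|) :=
        (hkmeas.abs.mul h₁.g_meas).mul (measurable_const.mul humeas.abs)
      have hHint : IntegrableOn
          (fun s => |k₁ (t:ℝ) s| * g₁ s * (q * |(u (Set.projIcc (0:ℝ) 1 zero_le_one s) : ℝ)|))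
          (Icc (0:ℝ) 1) := by
        apply Integrable.mono' (h₁.gΦ_int.const_mul (q * ρ₀)) hHmeas.aestronglyMeasurable
        filter_upwards [h₁.k_le (t:ℝ) t.2, h₁.g_nonneg] with s hk hg
        rw [Real.norm_eq_abs]
        have h1 : |(u (Set.projIcc (0:ℝ) 1 zero_le_one s) : ℝ)| ≤ ρ₀ := bu _
        have habs : 0 ≤ |k₁ (t:ℝ) s| * g₁ s *
            (q * |(u (Set.projIcc (0:ℝ) 1 zero_le_one s) : ℝ)|) :=
          mul_nonneg (mul_nonneg (abs_nonneg _) hg) (mul_nonneg hqpos.le (abs_nonneg _))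
        rw [abs_of_nonneg habs]
        have h2 : |k₁ (t:ℝ) s| * (q * |(u (Set.projIcc (0:ℝ) 1 zero_le_one s) : ℝ)|)
            ≤ Φ₁ s * (q * ρ₀) :=
          mul_le_mul hk (mul_le_mul_of_nonneg_left h1 hqpos.le)
            (mul_nonneg hqpos.le (abs_nonneg _)) ((abs_nonneg _).trans hk)
        have h3 := mul_le_mul_of_nonneg_right h2 hg
        calc |k₁ (t:ℝ) s| * g₁ s * (q * |(u (Set.projIcc (0:ℝ) 1 zero_le_one s) : ℝ)|)
            = |k₁ (t:ℝ) s| * (q * |(u (Set.projIcc (0:ℝ) 1 zero_le_one s) : ℝ)|) * g₁ s := by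
              ring
          _ ≤ Φ₁ s * (q * ρ₀) * g₁ s := h3
          _ = q * ρ₀ * (g₁ s * Φ₁ s) := by ring
      have e2 : |lam * u t| ≤ ∫ s in Icc (0:ℝ) 1,
          |k₁ (t:ℝ) s| * |g₁ s| * |f₁ s (u (Set.projIcc (0:ℝ) 1 zero_le_one s))
            (v (Set.projIcc (0:ℝ) 1 zero_le_one s))| := by
        rw [hfix₁ t]
        simpa [Real.norm_eq_abs, abs_mul] using
          norm_integral_le_integral_norm (μ := volume.restrict (Icc (0:ℝ) 1))
            (f := fun s => k₁ (t:ℝ) s * g₁ s * f₁ s (u (Set.projIcc (0:ℝ) 1 zero_le_one s))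
              (v (Set.projIcc (0:ℝ) 1 zero_le_one s)))
      have e3 : (∫ s in Icc (0:ℝ) 1,
          |k₁ (t:ℝ) s| * |g₁ s| * |f₁ s (u (Set.projIcc (0:ℝ) 1 zero_le_one s))
            (v (Set.projIcc (0:ℝ) 1 zero_le_one s))|)
          ≤ ∫ s in Icc (0:ℝ) 1,
            |k₁ (t:ℝ) s| * g₁ s * (q * |(u (Set.projIcc (0:ℝ) 1 zero_le_one s) : ℝ)|) := by
        apply integral_mono_of_nonneg
        · exact Filter.Eventually.of_forall fun s => by
            simpa using mul_nonneg (mul_nonneg (abs_nonneg _) (abs_nonneg _)) (abs_nonneg _)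
        · exact hHint
        · filter_upwards [ae_restrict_mem measurableSet_Icc, h₁.g_nonneg] with s hs hg
          rw [abs_of_nonneg hg, abs_of_nonneg (h₁.f_nonneg _ _ _)]
          exact mul_le_mul_of_nonneg_left (hf₁ s hs _ _ (bu _) (bv _))
            (mul_nonneg (abs_nonneg _) hg)
      have e4 : (∫ s in Icc (0:ℝ) 1,
          |k₁ (t:ℝ) s| * g₁ s * (q * |(u (Set.projIcc (0:ℝ) 1 zero_le_one s) : ℝ)|))
          = q * (L₁ w) t := by
        have hfun : (fun s =>
            |k₁ (t:ℝ) s| * g₁ s * (q * |(u (Set.projIcc (0:ℝ) 1 zero_le_one s) : ℝ)|))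
            = fun s => q * (|k₁ (t:ℝ) s| * g₁ s * w (Set.projIcc (0:ℝ) 1 zero_le_one s)) := by
          funext s
          rw [hwapp]
          ring
        rw [hfun, integral_const_mul, ← hL₁ w t]
      have e0 : w t ≤ lam * |u t| := by
        rw [hwapp]
        exact le_mul_of_one_le_left (abs_nonneg _) hlam
      have e1 : lam * |u t| = |lam * u t| := by
        rw [abs_mul, abs_of_nonneg (by linarith : (0:ℝ) ≤ lam)]
      calc w t ≤ lam * |u t| := e0
        _ = |lam * u t| := e1
        _ ≤ _ := e2
        _ ≤ _ := e3
        _ = q * (L₁ w) t := e4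
    -- invertibility beyond the spectral radius
    have unit_of_gt : ∀ l : ℝ, r < l → IsUnit (algebraMap ℝ OpA l - L₁) := by
      intro l hl
      have hl0 : 0 < l := hrpos.trans hl
      rw [← spectrum.notMem_iff]
      intro hmem
      have hle : (‖l‖₊ : ENNReal) ≤ spectralRadius ℝ L₁ :=
        le_iSup₂ (f := fun k (_ : k ∈ spectrum ℝ L₁) => (‖k‖₊ : ENNReal)) l hmem
      rw [hr, ← ENNReal.ofReal_coe_nnreal, coe_nnnorm, Real.norm_eq_abs, abs_of_pos hl0] at hle
      have hcon := (ENNReal.ofReal_le_ofReal_iff hrpos.le).1 hle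
      linarith
    -- Neumann series : the resolvent is positive for large l
    have neumann : ∀ m : ℝ, ‖L₁‖ < m → PosOp (ResA L₁ m) := by
      intro m hm
      exact (posOp_coneSet.res_neumann L₁ PosL m hm).2
    -- positivity of the resolvent on all of (r, ∞)
    have posR : ∀ l : ℝ, r < l → PosOp (ResA L₁ l) := by
      intro l hl
      set S : Set ℝ := {m | l ≤ m ∧ ∀ ν : ℝ, m ≤ ν → PosOp (ResA L₁ ν)} with hSdef
      have hSne : S.Nonempty := by
        refine ⟨max l (‖L₁‖ + 1), le_max_left _ _, fun ν hν => ?_⟩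
        have h1 : ‖L₁‖ < ν := by
          have := le_max_right l (‖L₁‖ + 1)
          linarith
        exact neumann ν h1
      have hSbdd : BddBelow S := ⟨l, fun m hm => hm.1⟩
      have hls : l ≤ sInf S := le_csInf hSne fun m hm => hm.1
      set s : ℝ := sInf S with hsdef
      have hrs : r < s := hl.trans_le hls
      have hsu : IsUnit (algebraMap ℝ OpA s - L₁) := unit_of_gt s hrs
      set ρ : ℝ := ‖ResA L₁ s‖ with hρdef
      have hρpos : 0 < ρ := by
        rw [hρdef]
        exact res_norm_pos L₁ s hsu
      have hd1 : (0:ℝ) < 1/(4*ρ) := by positivity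
      obtain ⟨l1, hl1S, hl1lt⟩ := exists_lt_of_csInf_lt hSne
        (show sInf S < s + 1/(4*ρ) by rw [← hsdef]; linarith)
      have hsl1 : s ≤ l1 := csInf_le hSbdd hl1S
      have hPos1 : PosOp (ResA L₁ l1) := hl1S.2 l1 le_rfl
      have hdist : |s - l1| * ρ ≤ 1/4 := by
        rw [abs_of_nonpos (by linarith : s - l1 ≤ 0)]
        have h14 : 1/(4*ρ) * ρ = 1/4 := by field_simp
        have h5 := mul_le_mul_of_nonneg_right (by linarith : l1 - s ≤ 1/(4*ρ)) hρpos.le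
        calc -(s - l1) * ρ = (l1 - s) * ρ := by ring
          _ ≤ 1/(4*ρ) * ρ := h5
          _ = 1/4 := h14
      have hbnd : ‖ResA L₁ l1‖ ≤ 2 * ρ := by
        have hb := res_norm_bound L₁ s l1 hsu (1/4) hdist (by norm_num)
        have e : ((1:ℝ) - 1/4)⁻¹ = 4/3 := by norm_num
        rw [e] at hb
        rw [← hρdef] at hb
        linarith
      set mu : ℝ := max (s - 1/(16*ρ)) ((r+s)/2) with hmudef
      have step : ∀ ν : ℝ, mu ≤ ν → ν ≤ l1 → PosOp (ResA L₁ ν) := by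
        intro ν h1 h2
        have hν1 : l1 - ν ≤ 5/(16*ρ) := by
          have e2 : s - 1/(16*ρ) ≤ mu := le_max_left _ _
          have e5 : 1/(4*ρ) + 1/(16*ρ) = 5/(16*ρ) := by rw [div_add_div _ _ (by positivity) (by positivity)]; rw [div_eq_div_iff (by positivity) (by positivity)]; ring
          linarith
        have h516 : (0:ℝ) ≤ 5/(16*ρ) := by positivity
        have hc : (l1 - ν) * ‖ResA L₁ l1‖ ≤ 5/8 := by
          have e6 : 5/(16*ρ) * (2*ρ) = 5/8 := by rw [div_mul_eq_mul_div, div_eq_div_iff (by positivity) (by norm_num)]; ring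
          have hn0 : (0:ℝ) ≤ ‖ResA L₁ l1‖ :=
            (res_norm_pos L₁ l1 (unit_of_gt l1 (hrs.trans_le hsl1))).le
          calc (l1 - ν) * ‖ResA L₁ l1‖ ≤ (5/(16*ρ)) * (2*ρ) :=
            mul_le_mul hν1 hbnd hn0 h516
            _ = 5/8 := e6
        have hd : |l1 - ν| * ‖ResA L₁ l1‖ < 1 := by
          rw [abs_of_nonneg (by linarith : (0:ℝ) ≤ l1 - ν)]
          linarith
        exact posOp_coneSet.res_step L₁ l1 ν (unit_of_gt l1 (hrs.trans_le hsl1)) hPos1 h2 hd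
      have hmuS : max mu l ∈ S := by
        refine ⟨le_max_right _ _, fun ν hν => ?_⟩
        by_cases hcase : l1 ≤ ν
        · exact hl1S.2 ν hcase
        · exact step ν (le_trans (le_max_left mu l) hν) (le_of_lt (not_le.1 hcase))
      have hmults : s ≤ max mu l := by
        rw [hsdef]
        exact csInf_le hSbdd hmuS
      have hmu_lt_s : mu < s := by
        apply max_lt
        · have : (0:ℝ) < 1/(16*ρ) := by positivity
          linarith
        · linarith
      by_cases hml : mu ≤ l
      · rw [max_eq_right hml] at hmuS
        exact hmuS.2 l le_rfl
      · exfalso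
        rw [max_eq_left (le_of_not_ge hml)] at hmults
        linarith
    -- apply to l = 1/q
    have hqlt : q < 1/r := by
      rw [hqdef, hμ] at *
      linarith
    have hq' : r < 1/q := by
      rw [lt_div_iff₀ hqpos]
      have := (lt_div_iff₀ hrpos).1 hqlt
      linarith [mul_comm q r]
    have hPosq : PosOp (ResA L₁ (1/q)) := posR (1/q) hq'
    have hqu : IsUnit (algebraMap ℝ OpA (1/q) - L₁) := unit_of_gt _ hq'
    have hcancel : ResA L₁ (1/q) * (algebraMap ℝ OpA (1/q) - L₁) = 1 := by
      unfold ResA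
      exact Ring.inverse_mul_cancel _ hqu
    set z : C(I01, ℝ) := L₁ w - (1/q) • w with hzdef
    have hznn : ∀ t : I01, 0 ≤ z t := by
      intro t
      have hk := key t
      have h4 : (1/q) * w t ≤ (L₁ w) t := by
        rw [one_div, inv_mul_le_iff₀ hqpos]
        exact hk
      have hz : z t = (L₁ w) t - (1/q) * w t := by
        rw [hzdef, ContinuousMap.sub_apply, ContinuousMap.smul_apply, smul_eq_mul]
      rw [hz]
      linarith
    have happly : (algebraMap ℝ OpA (1/q) - L₁) w = -z := by
      rw [ContinuousLinearMap.sub_apply, Algebra.algebraMap_eq_smul_one,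
        ContinuousLinearMap.smul_apply, ContinuousLinearMap.one_apply, hzdef]
      abel
    have hwz : w = -(ResA L₁ (1/q) z) := by
      have h1 : (ResA L₁ (1/q) * (algebraMap ℝ OpA (1/q) - L₁)) w = w := by
        rw [hcancel]
        exact ContinuousLinearMap.one_apply w
      rw [ContinuousLinearMap.mul_apply, happly, map_neg] at h1
      exact h1.symm
    ext t
    have h1 : w t ≤ 0 := by
      rw [hwz, ContinuousMap.neg_apply]
      have := hPosq z hznn t
      linarith
    have h2 : |u t| = 0 := le_antisymm (by rw [← hwapp t]; exact h1) (abs_nonneg _)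
    have h3 : (u t : ℝ) = 0 := abs_eq_zero.1 h2
    simp [h3]
  · -- degenerate case : q ≤ 0
    push_neg at hqpos
    ext t
    have hae : (fun s => k₁ (t:ℝ) s * g₁ s * f₁ s (u (Set.projIcc (0:ℝ) 1 zero_le_one s))
        (v (Set.projIcc (0:ℝ) 1 zero_le_one s)))
        =ᵐ[volume.restrict (Icc (0:ℝ) 1)] 0 := by
      filter_upwards [ae_restrict_mem measurableSet_Icc] with s hs
      have h1 := hf₁ s hs (u (Set.projIcc (0:ℝ) 1 zero_le_one s))
        (v (Set.projIcc (0:ℝ) 1 zero_le_one s)) (bu _) (bv _)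
      have h2 : q * |(u (Set.projIcc (0:ℝ) 1 zero_le_one s) : ℝ)| ≤ 0 :=
        mul_nonpos_of_nonpos_of_nonneg hqpos (abs_nonneg _)
      have h3 : f₁ s (u (Set.projIcc (0:ℝ) 1 zero_le_one s))
          (v (Set.projIcc (0:ℝ) 1 zero_le_one s)) = 0 :=
        le_antisymm (h1.trans h2) (h₁.f_nonneg _ _ _)
      simp [h3]
    have h0 : lam * u t = 0 := by
      rw [hfix₁ t]
      exact integral_eq_zero_of_ae hae
    have hlam0 : lam ≠ 0 := by linarith
    have : (u t : ℝ) = 0 := by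
      rcases mul_eq_zero.mp h0 with h | h
      · exact absurd h hlam0
      · exact h
    simp [this]
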